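/- Every nonempty C∞-word w admits exactly two primitives of minimal length, and these two primitives are complements of each other; likewise, w admits exactly two primitives of maximal length, and these two primitives are complements of each other. -/

import Mathlib

namespace CInfWords

open scoped Classical

/-- Run-length encoding Δ of a word. -/
def rle : List ℕ → List ℕ
  | [] => []
  | [_] => [1]
  | a :: b :: l =>
    if a = b then
      match rle (b :: l) with
      | [] => [1]
      | c :: r => (c + 1) :: r
    else 1 :: rle (b :: l)

/-- Erase a leading `1`, if any. -/
def trim1 : List ℕ → List ℕ
  | 1 :: l => l
  | l => l

/-- The derivative `D`: the run-length encoding with the first and/or the last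
symbol erased when they are equal to `1`. -/
def D (w : List ℕ) : List ℕ := trim1 ((trim1 (rle w).reverse).reverse)

/-- Words over Σ = {1,2}. -/
def IsWord (w : List ℕ) : Prop := ∀ x ∈ w, x = 1 ∨ x = 2

/-- Words over Σ₀ = {0,1,2}. -/
def IsWord0 (w : List ℕ) : Prop := ∀ x ∈ w, x = 0 ∨ x = 1 ∨ x = 2

/-- Σ₀^{++}: words over Σ₀ that are empty or begin with a nonzero symbol. -/
def Spp (w : List ℕ) : Prop := IsWord0 w ∧ (w = [] ∨ w.headI ≠ 0)

/-- C^∞-words: every iterated derivative is a word over Σ = {1,2}. -/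
def Cinf (w : List ℕ) : Prop := ∀ k, IsWord (D^[k] w)

/-- The height of a C^∞-word: the least k with D^[k] w = ε. -/
noncomputable def height (w : List ℕ) : ℕ := sInf {k | D^[k] w = []}

/-- The root of a C^∞-word of height k > 0: its (k-1)-st derivative. -/
noncomputable def root (w : List ℕ) : List ℕ := D^[height w - 1] w

/-- `v` is a primitive of `w`. -/
def Primitive (v w : List ℕ) : Prop := IsWord v ∧ D v = w

/-- The complement: swap 1's and 2's. -/
def compl (w : List ℕ) : List ℕ := w.map (fun x => 3 - x)

/-- Minimal C^∞-words: every derivative is a shortest primitive of the next one. -/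
def Minimal (w : List ℕ) : Prop :=
  Cinf w ∧ 0 < height w ∧
    ∀ j, j + 2 ≤ height w → ∀ v, Primitive v (D^[j+1] w) → (D^[j] w).length ≤ v.length

/-- Maximal C^∞-words: every derivative is a longest primitive of the next one. -/
def Maximal (w : List ℕ) : Prop :=
  Cinf w ∧ 0 < height w ∧
    ∀ j, j + 2 ≤ height w → ∀ v, Primitive v (D^[j+1] w) → v.length ≤ (D^[j] w).length

def LeftMinimal (w : List ℕ) : Prop := ∃ v, Minimal v ∧ w <+: v
def RightMinimal (w : List ℕ) : Prop := ∃ v, Minimal v ∧ w <:+ v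
def LeftMaximal (w : List ℕ) : Prop := ∃ v, Maximal v ∧ w <+: v
def RightMaximal (w : List ℕ) : Prop := ∃ v, Maximal v ∧ w <:+ v

/-- Single-rooted minimal words. -/
def SRMin (w : List ℕ) : Prop := Minimal w ∧ (root w).length = 1

/-- Double-rooted minimal words. -/
def DRMin (w : List ℕ) : Prop := Minimal w ∧ (root w).length = 2

/-- The left frontier Ψ(w). -/
noncomputable def psi (w : List ℕ) : List ℕ :=
  (List.range (height w)).map fun i =>
    if i = 0 then w.getD 0 0
    else if (D^[i] w).getD 0 0 = 2 ∧ (D^[i-1] w).getD 0 0 ≠ (D^[i-1] w).getD 1 0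
      then 0
    else (D^[i] w).getD 0 0

/-- The single-rooted minimal word with left frontier U (if it exists). -/
noncomputable def srmOf (U : List ℕ) : List ℕ :=
  if h : ∃ w, SRMin w ∧ psi w = U then h.choose else []

/-- The double-rooted minimal word with left frontier U (if it exists). -/
noncomputable def drmOf (U : List ℕ) : List ℕ :=
  if h : ∃ w, DRMin w ∧ psi w = U then h.choose else []

/-- Γs: the right frontier of the single-rooted minimal word with left frontier U. -/
noncomputable def Gs (U : List ℕ) : List ℕ := psi (srmOf U).reverse

/-- Γd: the right frontier of the double-rooted minimal word with left frontier U. -/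
noncomputable def Gd (U : List ℕ) : List ℕ := psi (drmOf U).reverse

/-- Θ = Γs ∘ Γd. -/
noncomputable def Th (U : List ℕ) : List ℕ := Gs (Gd U)

/-- Π = Γd ∘ Γs. -/
noncomputable def Pp (U : List ℕ) : List ℕ := Gd (Gs U)

/-- One step in the graph G: from node U, the edge labeled 1 goes to U·1, the edge
labeled 2 goes to U·2, and the edge labeled 0 goes to Θ(U)·2. -/
noncomputable def step (U : List ℕ) (a : ℕ) : List ℕ :=
  if a = 1 then U ++ [1] else if a = 2 then U ++ [2] else Th U ++ [2]

/-- The endpoint of the path in G starting at the origin ε and labeled by W. -/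
noncomputable def pathEnd (W : List ℕ) : List ℕ := W.foldl step []

/-- W ∈ Σ₀^{++} labels a directed path in G from ε to U. -/
def LabelsPath (W U : List ℕ) : Prop := Spp W ∧ pathEnd W = U

/-- ‖U‖: the number of words in Σ₀^{++} labeling a path in G from ε to U. -/
noncomputable def normG (U : List ℕ) : ℕ := {W | LabelsPath W U}.ncard

/-- |U|: the length of the single-rooted minimal word with left frontier U. -/
noncomputable def len (U : List ℕ) : ℕ := (srmOf U).length

/-- u is the minimal part of w: the first (leftmost-occurring) factor of w that
is a single-rooted minimal word of the same height as w. -/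
def IsMinPart (u w : List ℕ) : Prop :=
  ∃ s t, w = s ++ u ++ t ∧ SRMin u ∧ height u = height w ∧
    ∀ u' s' t', w = s' ++ u' ++ t' → SRMin u' → height u' = height w →
      s.length ≤ s'.length

section AuxTwoExtremal

/-- Blocks expansion: the word starting with letter `b` whose run-length encoding is `c`. -/
def expand : ℕ → List ℕ → List ℕ
  | _, [] => []
  | b, n :: l => List.replicate n b ++ expand (3 - b) l

lemma trim1_one_cons (l : List ℕ) : trim1 (1 :: l) = l := rfl

lemma trim1_of_headI_ne (l : List ℕ) (h : l.headI ≠ 1) : trim1 l = l := by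
  rcases l with _ | ⟨a, t⟩
  · rfl
  · rcases a with _ | _ | n
    · rfl
    · simp at h
    · rfl

lemma trim1_cases (l w : List ℕ) (h : trim1 l = w) : l = 1 :: w ∨ (l = w ∧ l.headI ≠ 1) := by
  rcases l with _ | ⟨a, t⟩
  · right; exact ⟨h, by simp⟩
  · rcases a with _ | _ | n
    · right; exact ⟨h, by simp⟩
    · left; rw [← h]; rfl
    · right; exact ⟨h, by simp⟩

lemma rle_cons_cons_eq (a : ℕ) (l : List ℕ) :
    rle (a :: a :: l) = match rle (a :: l) with | [] => [1] | c :: r => (c + 1) :: r := by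
  rw [rle]; simp

lemma rle_cons_self (a : ℕ) (l : List ℕ) (c : ℕ) (r : List ℕ) (h : rle (a :: l) = c :: r) :
    rle (a :: a :: l) = (c + 1) :: r := by
  rw [rle_cons_cons_eq, h]

lemma rle_cons_cons_ne (a b : ℕ) (l : List ℕ) (h : a ≠ b) :
    rle (a :: b :: l) = 1 :: rle (b :: l) := by
  rw [rle, if_neg h]

lemma rle_ne_nil : ∀ (l : List ℕ) (a : ℕ), rle (a :: l) ≠ [] := by
  intro l
  induction l with
  | nil => intro a; simp [rle]
  | cons b t ih =>
    intro a
    by_cases hab : a = b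
    · subst hab; rw [rle_cons_cons_eq]; cases h : rle (a :: t) <;> simp
    · rw [rle_cons_cons_ne a b t hab]; simp

lemma expand_nil (b : ℕ) : expand b [] = [] := rfl

lemma expand_cons (b n : ℕ) (l : List ℕ) :
    expand b (n :: l) = List.replicate n b ++ expand (3 - b) l := rfl

lemma expand_length (c : List ℕ) : ∀ b, (expand b c).length = c.sum := by
  induction c with
  | nil => intro b; rfl
  | cons n l ih => intro b; simp [expand_cons, ih]

lemma three_sub (b : ℕ) (hb : b = 1 ∨ b = 2) : (3 - b = 1 ∨ 3 - b = 2) ∧ 3 - (3 - b) = b := by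
  rcases hb with rfl | rfl <;> simp

lemma expand_isWord (c : List ℕ) : ∀ b, (b = 1 ∨ b = 2) → IsWord (expand b c) := by
  induction c with
  | nil => intro b _ x hx; simp [expand_nil] at hx
  | cons n l ih =>
    intro b hb x hx
    rw [expand_cons, List.mem_append] at hx
    rcases hx with hx | hx
    · rw [List.eq_of_mem_replicate hx]; exact hb
    · exact ih (3 - b) (three_sub b hb).1 x hx

lemma compl_expand (c : List ℕ) : ∀ b, (b = 1 ∨ b = 2) → compl (expand b c) = expand (3 - b) c := by
  induction c with
  | nil => intro b _; rfl
  | cons n l ih =>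
    intro b hb
    rw [expand_cons, expand_cons, compl, List.map_append, List.map_replicate, ← compl,
      ih (3 - b) (three_sub b hb).1, (three_sub b hb).2]

lemma expand_headI (b n : ℕ) (l : List ℕ) (hn : 0 < n) : (expand b (n :: l)).headI = b := by
  obtain ⟨m, rfl⟩ : ∃ m, n = m + 1 := ⟨n - 1, by omega⟩
  rw [expand_cons, List.replicate_succ, List.cons_append]
  rfl

lemma expand_ne_nil (b n : ℕ) (l : List ℕ) (hn : 0 < n) : expand b (n :: l) ≠ [] := by
  obtain ⟨m, rfl⟩ : ∃ m, n = m + 1 := ⟨n - 1, by omega⟩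
  rw [expand_cons, List.replicate_succ, List.cons_append]
  simp

lemma rle_replicate (b : ℕ) : ∀ n, rle (List.replicate (n + 1) b) = [n + 1] := by
  intro n
  induction n with
  | zero => simp [rle]
  | succ n ih =>
    rw [List.replicate_succ] at ih
    rw [List.replicate_succ, List.replicate_succ]
    exact rle_cons_self b _ (n + 1) [] ih

lemma rle_replicate_append (b : ℕ) (w : List ℕ) (hne : w ≠ []) (hh : w.headI ≠ b) :
    ∀ n, rle (List.replicate (n + 1) b ++ w) = (n + 1) :: rle w := by
  intro n
  induction n with
  | zero =>
    rcases w with _ | ⟨h, t⟩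
    · exact absurd rfl hne
    · simp only [List.headI] at hh
      rw [List.replicate_succ, List.replicate_zero, List.cons_append]
      simp only [List.nil_append]
      rw [rle_cons_cons_ne b h t (fun e => hh e.symm)]
  | succ n ih =>
    rw [List.replicate_succ, List.cons_append] at ih ⊢
    rw [List.replicate_succ, List.cons_append]
    exact rle_cons_self b _ (n + 1) (rle w) ih

lemma rle_expand (c : List ℕ) : ∀ b, (∀ x ∈ c, 0 < x) → (b = 1 ∨ b = 2) →
    rle (expand b c) = c := by
  induction c with
  | nil => intro b _ _; rfl
  | cons n l ih =>
    intro b hc hb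
    obtain ⟨m, rfl⟩ : ∃ m, n = m + 1 := ⟨n - 1, by have := hc n (by simp); omega⟩
    rcases l with _ | ⟨k, l'⟩
    · rw [expand_cons, expand_nil, List.append_nil, rle_replicate]
    · have hk : 0 < k := hc k (by simp)
      have hbne : (expand (3 - b) (k :: l')).headI ≠ b := by
        rw [expand_headI (3 - b) k l' hk]
        rcases hb with rfl | rfl <;> simp
      rw [expand_cons, rle_replicate_append b _ (expand_ne_nil (3 - b) k l' hk) hbne,
        ih (3 - b) (fun x hx => hc x (by simp [hx])) (three_sub b hb).1]

lemma expand_rle : ∀ (n : ℕ) (v : List ℕ), v.length ≤ n → IsWord v → v ≠ [] →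
    expand v.headI (rle v) = v := by
  intro n
  induction n with
  | zero =>
    intro v hv _ hne
    interval_cases h : v.length
    · exact absurd (List.length_eq_zero_iff.1 h) hne
  | succ n ih =>
    intro v hlen hv hne
    match v, hne with
    | [a], _ =>
      show expand a (rle [a]) = [a]
      rw [show rle [a] = [1] from rfl, expand_cons]
      rfl
    | a :: b :: l, _ =>
      have hw' : IsWord (b :: l) := fun x hx => hv x (by simp [hx])
      have hlen' : (b :: l).length ≤ n := by
        simp only [List.length_cons] at hlen ⊢; omega
      have ihv := ih (b :: l) hlen' hw' (by simp)
      simp only [List.headI] at ihv ⊢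
      by_cases hab : a = b
      · subst hab
        obtain ⟨c, r, hcr⟩ : ∃ c r, rle (a :: l) = c :: r := by
          cases h : rle (a :: l) with
          | nil => exact absurd h (rle_ne_nil l a)
          | cons c r => exact ⟨c, r, rfl⟩
        rw [hcr] at ihv
        rw [rle_cons_self a l c r hcr, expand_cons, List.replicate_succ, List.cons_append,
          ← expand_cons, ihv]
      · have ha := hv a (by simp)
        have hb := hv b (by simp)
        have hb3 : b = 3 - a := by rcases ha with rfl | rfl <;> rcases hb with rfl | rfl <;> omega
        rw [rle_cons_cons_ne a b l hab, expand_cons, List.replicate_succ, List.replicate_zero]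
        simp only [List.cons_append, List.nil_append]
        rw [← hb3, ihv]

/-- The possible run-length encodings of a primitive of `w`. -/
def Sw (w c : List ℕ) : Prop :=
  c = 1 :: (w ++ [1]) ∨
  (c = 1 :: w ∧ w.reverse.headI = 2) ∨
  (c = w ++ [1] ∧ w.headI = 2) ∨
  (c = w ∧ w.headI = 2 ∧ w.reverse.headI = 2)

lemma headI_mem' {l : List ℕ} (h : l ≠ []) : l.headI ∈ l := by
  cases l with
  | nil => exact absurd rfl h
  | cons a t => exact List.mem_cons_self

lemma headI_append_of_ne_nil (l l' : List ℕ) (h : l ≠ []) : (l ++ l').headI = l.headI := by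
  cases l with
  | nil => exact absurd rfl h
  | cons a t => rfl

lemma Dc_of_Sw (w c : List ℕ) (hne : w ≠ []) (h : Sw w c) :
    trim1 ((trim1 c.reverse).reverse) = w := by
  have hrne : w.reverse ≠ [] := by simpa using hne
  rcases h with rfl | ⟨rfl, h2⟩ | ⟨rfl, h1⟩ | ⟨h0, h1, h2⟩
  · have e1 : (1 :: (w ++ [1])).reverse = 1 :: (w.reverse ++ [1]) := by simp
    have e2 : (w.reverse ++ [1]).reverse = 1 :: w := by simp
    rw [e1, trim1_one_cons, e2, trim1_one_cons]
  · have e1 : (1 :: w).reverse = w.reverse ++ [1] := by simp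
    have e2 : (w.reverse ++ [1]).reverse = 1 :: w := by simp
    rw [e1, trim1_of_headI_ne (w.reverse ++ [1])
      (by rw [headI_append_of_ne_nil _ _ hrne, h2]; simp), e2, trim1_one_cons]
  · have e1 : (w ++ [1]).reverse = 1 :: w.reverse := by simp
    rw [e1, trim1_one_cons, List.reverse_reverse, trim1_of_headI_ne w (by rw [h1]; simp)]
  · rw [h0, trim1_of_headI_ne w.reverse (by rw [h2]; simp), List.reverse_reverse,
      trim1_of_headI_ne w (by rw [h1]; simp)]

lemma revHeadI_mem (w : List ℕ) (hw : IsWord w) (hne : w ≠ []) :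
    w.reverse.headI = 1 ∨ w.reverse.headI = 2 := by
  have hrne : w.reverse ≠ [] := by simpa using hne
  have := headI_mem' hrne
  exact hw _ (List.mem_reverse.1 this)

lemma Sw_of_D (w c : List ℕ) (hw : IsWord w) (hne : w ≠ []) (hc : c ≠ [])
    (h : trim1 ((trim1 c.reverse).reverse) = w) : Sw w c := by
  obtain ⟨c', hc'⟩ : ∃ c', (trim1 c.reverse).reverse = c' := ⟨_, rfl⟩
  rw [hc'] at h
  have hrev : trim1 c.reverse = c'.reverse := by rw [← hc', List.reverse_reverse]
  have hcc : c = c' ++ [1] ∨ (c = c' ∧ c'.reverse.headI ≠ 1) := by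
    rcases trim1_cases c.reverse c'.reverse hrev with h1 | ⟨h1, h2⟩
    · left; have := congrArg List.reverse h1; simpa using this
    · right
      have e : c = c' := by have := congrArg List.reverse h1; simpa using this
      exact ⟨e, e ▸ h2⟩

  rcases trim1_cases c' w h with h1 | ⟨h1, h2⟩
  · rcases hcc with h3 | ⟨h3, h4⟩
    · left; rw [h3, h1]; simp
    · right; left
      refine ⟨by rw [h3, h1], ?_⟩
      rw [h1] at h4
      have e : (1 :: w).reverse.headI = w.reverse.headI := by
        rw [List.reverse_cons, headI_append_of_ne_nil _ _ (by simpa using hne)]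
      rw [e] at h4
      rcases revHeadI_mem w hw hne with h5 | h5
      · exact absurd h5 h4
      · exact h5
  · have hw2 : w.headI = 2 := by
      rcases hw _ (headI_mem' hne) with h5 | h5
      · rw [h1] at h2; exact absurd h5 h2
      · exact h5
    rcases hcc with h3 | ⟨h3, h4⟩
    · right; right; left; exact ⟨by rw [h3, h1], hw2⟩
    · right; right; right
      refine ⟨by rw [h3, h1], hw2, ?_⟩
      rw [h1] at h4
      rcases revHeadI_mem w hw hne with h5 | h5
      · exact absurd h5 h4
      · exact h5

lemma primitive_iff (w : List ℕ) (hw : IsWord w) (hne : w ≠ []) (v : List ℕ) :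
    Primitive v w ↔ ∃ b c, (b = 1 ∨ b = 2) ∧ Sw w c ∧ v = expand b c := by
  constructor
  · rintro ⟨hv, hD⟩
    have hvne : v ≠ [] := by
      rintro rfl
      exact hne (by rw [← hD]; rfl)
    refine ⟨v.headI, rle v, hv _ (headI_mem' hvne), ?_,
      (expand_rle v.length v le_rfl hv hvne).symm⟩
    obtain ⟨a, t, rfl⟩ := List.exists_cons_of_ne_nil hvne
    exact Sw_of_D w _ hw hne (rle_ne_nil t a) hD
  · rintro ⟨b, c, hb, hc, rfl⟩
    have hwpos : ∀ x ∈ w, 0 < x := fun x hx => by rcases hw x hx with rfl | rfl <;> omega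
    have hsub : ∀ x ∈ c, x = 1 ∨ x ∈ w := by
      intro x hx
      rcases hc with rfl | ⟨rfl, _⟩ | ⟨rfl, _⟩ | ⟨rfl, _, _⟩ <;> simp -failIfUnchanged at hx <;> tauto
    have hpos : ∀ x ∈ c, 0 < x := by
      intro x hx
      rcases hsub x hx with rfl | h
      · omega
      · exact hwpos x h
    refine ⟨expand_isWord c b hb, ?_⟩
    show trim1 ((trim1 (rle (expand b c)).reverse).reverse) = w
    rw [rle_expand c b hpos hb]
    exact Dc_of_Sw w c hne hc

lemma Sw_head (w c : List ℕ) (hw : IsWord w) (hne : w ≠ []) (h : Sw w c) :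
    c ≠ [] ∧ 0 < c.headI := by
  obtain ⟨a, t, rfl⟩ := List.exists_cons_of_ne_nil hne
  have ha := hw a (by simp)
  rcases h with rfl | ⟨rfl, _⟩ | ⟨rfl, _⟩ | ⟨rfl, _, _⟩
  · exact ⟨by simp, by simp⟩
  · exact ⟨by simp, by simp⟩
  · refine ⟨by simp, ?_⟩
    rw [List.cons_append]
    simp only [List.headI]
    omega
  · refine ⟨by simp, ?_⟩
    simp only [List.headI]
    omega

lemma expand_one_ne_two (c : List ℕ) (hc : c ≠ []) (hpos : 0 < c.headI) :
    expand 1 c ≠ expand 2 c := by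
  obtain ⟨n, l, rfl⟩ := List.exists_cons_of_ne_nil hc
  have hn : 0 < n := hpos
  intro h
  have h1 := expand_headI 1 n l hn
  have h2 := expand_headI 2 n l hn
  rw [h] at h1
  exact absurd (h1.symm.trans h2) (by omega)

lemma extremal_sets_min (w : List ℕ) (hw : IsWord w) (hne : w ≠ []) (cm : List ℕ)
    (hcm : Sw w cm) (hmin : ∀ c, Sw w c → cm.sum ≤ c.sum)
    (huniq : ∀ c, Sw w c → c.sum ≤ cm.sum → c = cm) :
    {v | Primitive v w ∧ ∀ v', Primitive v' w → v.length ≤ v'.length}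
      = {expand 1 cm, expand 2 cm} := by
  ext v
  simp only [Set.mem_setOf_eq, Set.mem_insert_iff, Set.mem_singleton_iff]
  constructor
  · rintro ⟨hp, hm⟩
    rw [primitive_iff w hw hne] at hp
    obtain ⟨b, c, hb, hc, rfl⟩ := hp
    have h1 : Primitive (expand 1 cm) w :=
      (primitive_iff w hw hne _).2 ⟨1, cm, Or.inl rfl, hcm, rfl⟩
    have hle := hm _ h1
    rw [expand_length, expand_length] at hle
    have hceq : c = cm := huniq c hc hle
    subst hceq
    rcases hb with rfl | rfl
    · exact Or.inl rfl
    · exact Or.inr rfl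
  · intro h
    have hp : Primitive v w := by
      rcases h with rfl | rfl
      · exact (primitive_iff w hw hne _).2 ⟨1, cm, Or.inl rfl, hcm, rfl⟩
      · exact (primitive_iff w hw hne _).2 ⟨2, cm, Or.inr rfl, hcm, rfl⟩
    refine ⟨hp, ?_⟩
    intro v' hp'
    rw [primitive_iff w hw hne] at hp'
    obtain ⟨b', c', hb', hc', rfl⟩ := hp'
    have hl : v.length = cm.sum := by rcases h with rfl | rfl <;> rw [expand_length]
    rw [hl, expand_length]
    exact hmin c' hc'

lemma extremal_sets_max (w : List ℕ) (hw : IsWord w) (hne : w ≠ []) (cm : List ℕ)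
    (hcm : Sw w cm) (hmax : ∀ c, Sw w c → c.sum ≤ cm.sum)
    (huniq : ∀ c, Sw w c → cm.sum ≤ c.sum → c = cm) :
    {v | Primitive v w ∧ ∀ v', Primitive v' w → v'.length ≤ v.length}
      = {expand 1 cm, expand 2 cm} := by
  ext v
  simp only [Set.mem_setOf_eq, Set.mem_insert_iff, Set.mem_singleton_iff]
  constructor
  · rintro ⟨hp, hm⟩
    rw [primitive_iff w hw hne] at hp
    obtain ⟨b, c, hb, hc, rfl⟩ := hp
    have h1 : Primitive (expand 1 cm) w :=
      (primitive_iff w hw hne _).2 ⟨1, cm, Or.inl rfl, hcm, rfl⟩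
    have hle := hm _ h1
    rw [expand_length, expand_length] at hle
    have hceq : c = cm := huniq c hc hle
    subst hceq
    rcases hb with rfl | rfl
    · exact Or.inl rfl
    · exact Or.inr rfl
  · intro h
    have hp : Primitive v w := by
      rcases h with rfl | rfl
      · exact (primitive_iff w hw hne _).2 ⟨1, cm, Or.inl rfl, hcm, rfl⟩
      · exact (primitive_iff w hw hne _).2 ⟨2, cm, Or.inr rfl, hcm, rfl⟩
    refine ⟨hp, ?_⟩
    intro v' hp'
    rw [primitive_iff w hw hne] at hp'
    obtain ⟨b', c', hb', hc', rfl⟩ := hp'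
    have hl : v.length = cm.sum := by rcases h with rfl | rfl <;> rw [expand_length]
    rw [hl, expand_length]
    exact hmax c' hc'

lemma pack_min (w : List ℕ) (hw : IsWord w) (hne : w ≠ []) (cm : List ℕ)
    (hcm : Sw w cm) (hmin : ∀ c, Sw w c → cm.sum ≤ c.sum)
    (huniq : ∀ c, Sw w c → c.sum ≤ cm.sum → c = cm) :
    ∃ v₁ v₂, v₁ ≠ v₂ ∧ v₂ = compl v₁ ∧
      {v | Primitive v w ∧ ∀ v', Primitive v' w → v.length ≤ v'.length} = {v₁, v₂} := by
  refine ⟨expand 1 cm, expand 2 cm,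
    expand_one_ne_two cm (Sw_head w cm hw hne hcm).1 (Sw_head w cm hw hne hcm).2, ?_,
    extremal_sets_min w hw hne cm hcm hmin huniq⟩
  rw [compl_expand cm 1 (Or.inl rfl)]

lemma pack_max (w : List ℕ) (hw : IsWord w) (hne : w ≠ []) (cm : List ℕ)
    (hcm : Sw w cm) (hmax : ∀ c, Sw w c → c.sum ≤ cm.sum)
    (huniq : ∀ c, Sw w c → cm.sum ≤ c.sum → c = cm) :
    ∃ v₁ v₂, v₁ ≠ v₂ ∧ v₂ = compl v₁ ∧
      {v | Primitive v w ∧ ∀ v', Primitive v' w → v'.length ≤ v.length} = {v₁, v₂} := by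
  refine ⟨expand 1 cm, expand 2 cm,
    expand_one_ne_two cm (Sw_head w cm hw hne hcm).1 (Sw_head w cm hw hne hcm).2, ?_,
    extremal_sets_max w hw hne cm hcm hmax huniq⟩
  rw [compl_expand cm 1 (Or.inl rfl)]

end AuxTwoExtremal

/-- a nonempty C∞-word admits exactly two primitives of minimal length,
which are complements of each other, and exactly two primitives of maximal length,
which are complements of each other. -/
theorem two_extremal_primitives (w : List ℕ) (hw : Cinf w) (hne : w ≠ []) :
    (∃ v₁ v₂, v₁ ≠ v₂ ∧ v₂ = compl v₁ ∧
      {v | Primitive v w ∧ ∀ v', Primitive v' w → v.length ≤ v'.length} = {v₁, v₂}) ∧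
    (∃ v₁ v₂, v₁ ≠ v₂ ∧ v₂ = compl v₁ ∧
      {v | Primitive v w ∧ ∀ v', Primitive v' w → v'.length ≤ v.length} = {v₁, v₂}) := by
  have hw0 : IsWord w := by have := hw 0; simpa using this
  have hwh := hw0 _ (headI_mem' hne)
  have hwr := revHeadI_mem w hw0 hne
  constructor
  · -- minimal-length primitives
    rcases hwh with hh | hh
    · rcases hwr with hr | hr
      · -- w starts and ends with 1 : cm = 1 :: (w ++ [1])
        refine pack_min w hw0 hne (1 :: (w ++ [1])) (Or.inl rfl) ?_ ?_
        · intro c hc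
          rcases hc with rfl | ⟨rfl, e⟩ | ⟨rfl, e⟩ | ⟨rfl, e1, e2⟩ <;> simp <;> omega
        · intro c hc hle
          rcases hc with rfl | ⟨rfl, e⟩ | ⟨rfl, e⟩ | ⟨rfl, e1, e2⟩
          · rfl
          · omega
          · omega
          · omega
      · -- w starts with 1, ends with 2 : cm = 1 :: w
        refine pack_min w hw0 hne (1 :: w) (Or.inr (Or.inl ⟨rfl, hr⟩)) ?_ ?_
        · intro c hc
          rcases hc with rfl | ⟨rfl, e⟩ | ⟨rfl, e⟩ | ⟨rfl, e1, e2⟩ <;> simp <;> omega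
        · intro c hc hle
          rcases hc with rfl | ⟨rfl, e⟩ | ⟨rfl, e⟩ | ⟨rfl, e1, e2⟩
          · exfalso; simp at hle <;> omega
          · rfl
          · omega
          · omega
    · rcases hwr with hr | hr
      · -- w starts with 2, ends with 1 : cm = w ++ [1]
        refine pack_min w hw0 hne (w ++ [1]) (Or.inr (Or.inr (Or.inl ⟨rfl, hh⟩))) ?_ ?_
        · intro c hc
          rcases hc with rfl | ⟨rfl, e⟩ | ⟨rfl, e⟩ | ⟨rfl, e1, e2⟩ <;> simp <;> omega
        · intro c hc hle
          rcases hc with rfl | ⟨rfl, e⟩ | ⟨rfl, e⟩ | ⟨rfl, e1, e2⟩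
          · exfalso; simp at hle <;> omega
          · omega
          · rfl
          · omega
      · -- w starts and ends with 2 : cm = w
        refine pack_min w hw0 hne w (Or.inr (Or.inr (Or.inr ⟨rfl, hh, hr⟩))) ?_ ?_
        · intro c hc
          rcases hc with rfl | ⟨rfl, e⟩ | ⟨rfl, e⟩ | ⟨rfl, e1, e2⟩ <;> simp <;> omega
        · intro c hc hle
          rcases hc with rfl | ⟨rfl, e⟩ | ⟨rfl, e⟩ | ⟨rfl, e1, e2⟩
          · exfalso; simp at hle <;> omega
          · exfalso; simp at hle <;> omega
          · exfalso; simp at hle <;> omega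
          · rfl
  · -- maximal-length primitives : cm = 1 :: (w ++ [1])
    refine pack_max w hw0 hne (1 :: (w ++ [1])) (Or.inl rfl) ?_ ?_
    · intro c hc
      rcases hc with rfl | ⟨rfl, e⟩ | ⟨rfl, e⟩ | ⟨rfl, e1, e2⟩ <;> simp <;> omega
    · intro c hc hle
      rcases hc with rfl | ⟨rfl, e⟩ | ⟨rfl, e⟩ | ⟨rfl, e1, e2⟩
      · rfl
      · exfalso; simp at hle <;> omega
      · exfalso; simp at hle <;> omega
      · exfalso; simp at hle <;> omega

end CInfWords
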